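/- Let Y and Z be disjoint finite sets of clones with |Y| ≥ |Z| and |Y| + |Z| even. In a uniformly random perfect matching on Y ∪ Z, the probability that every element of Z is matched to an element of Y is Π_{i=0}^{|Z|-1} (|Y| - i)/(|Y| + |Z| - 1 - 2i), and this probability is at least 2^{-|Z|}. -/

import Mathlib

open Classical Finset Nat

section PMaux
variable {α : Type*} [Fintype α] [DecidableEq α]

noncomputable def Mset (Y Z : Finset α) : Finset (α → α) :=
  univ.filter (fun f => ((∀ a ∈ Y ∪ Z, f a ∈ Y ∪ Z ∧ f (f a) = a ∧ f a ≠ a) ∧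
    ∀ a ∉ Y ∪ Z, f a = a) ∧ ∀ z ∈ Z, f z ∈ Y)

lemma mem_Mset {Y Z : Finset α} {f : α → α} :
    f ∈ Mset Y Z ↔ ((∀ a ∈ Y ∪ Z, f a ∈ Y ∪ Z ∧ f (f a) = a ∧ f a ≠ a) ∧
      ∀ a ∉ Y ∪ Z, f a = a) ∧ ∀ z ∈ Z, f z ∈ Y := by
  simp [Mset]

lemma mem_Mset_empty {S : Finset α} {f : α → α} :
    f ∈ Mset S ∅ ↔ (∀ a ∈ S, f a ∈ S ∧ f (f a) = a ∧ f a ≠ a) ∧ ∀ a ∉ S, f a = a := by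
  simp [Mset]

lemma fiber_card (Y Z : Finset α) (hd : Disjoint Y Z) {z y : α} (hz : z ∈ Z) (hy : y ∈ Y) :
    ((Mset Y Z).filter (fun f => f z = y)).card = (Mset (Y.erase y) (Z.erase z)).card := by
  have hzy : z ≠ y := fun h => (Finset.disjoint_left.mp hd hy (h ▸ hz)).elim
  have hzY : z ∉ Y := Finset.disjoint_right.mp hd hz
  have hyZ : y ∉ Z := Finset.disjoint_left.mp hd hy
  apply Finset.card_bij' (i := fun f _ => fun a => if a = z ∨ a = y then a else f a)
    (j := fun g _ => fun a => if a = z then y else if a = y then z else g a)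
  · -- hi : maps into target
    intro f hf
    rw [Finset.mem_filter] at hf
    obtain ⟨hf, hfz⟩ := hf
    rw [mem_Mset] at hf
    obtain ⟨⟨h1, h2⟩, h3⟩ := hf
    have hinv : ∀ a b, a ∈ Y ∪ Z → b ∈ Y ∪ Z → f a = f b → a = b := by
      intro a b ha hb hab
      rw [← (h1 b hb).2.1, ← hab, (h1 a ha).2.1]
    have hfy : f y = z := by
      have := (h1 z (by simp [hz])).2.1
      rw [hfz] at this; exact this
    rw [mem_Mset]
    try dsimp only
    have hzYZ : z ∈ Y ∪ Z := Finset.mem_union_right _ hz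
    have hyYZ : y ∈ Y ∪ Z := Finset.mem_union_left _ hy
    refine ⟨⟨?_, ?_⟩, ?_⟩
    · intro a ha
      have haz : a ≠ z := by
        rcases Finset.mem_union.mp ha with h | h
        · exact fun e => hzY (e ▸ Finset.mem_of_mem_erase h)
        · exact Finset.ne_of_mem_erase h
      have hay : a ≠ y := by
        rcases Finset.mem_union.mp ha with h | h
        · exact Finset.ne_of_mem_erase h
        · exact fun e => hyZ (e ▸ Finset.mem_of_mem_erase h)
      have haYZ : a ∈ Y ∪ Z := by
        rcases Finset.mem_union.mp ha with h | h
        · exact Finset.mem_union_left _ (Finset.mem_of_mem_erase h)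
        · exact Finset.mem_union_right _ (Finset.mem_of_mem_erase h)
      have hfaz : f a ≠ z := by
        rw [← hfy]; intro e; exact hay (hinv a y haYZ hyYZ e)
      have hfay : f a ≠ y := by
        rw [← hfz]; intro e; exact haz (hinv a z haYZ hzYZ e)
      rw [if_neg (by tauto : ¬(a = z ∨ a = y))]
      have hfaYZ := (h1 a haYZ).1
      refine ⟨?_, ?_, (h1 a haYZ).2.2⟩
      · rcases Finset.mem_union.mp hfaYZ with h | h
        · exact Finset.mem_union_left _ (Finset.mem_erase.mpr ⟨hfay, h⟩)
        · exact Finset.mem_union_right _ (Finset.mem_erase.mpr ⟨hfaz, h⟩)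
      · rw [if_neg (by tauto : ¬(f a = z ∨ f a = y))]
        exact (h1 a haYZ).2.1
    · intro a ha
      by_cases h : a = z ∨ a = y
      · rw [if_pos h]
      · rw [if_neg h]
        apply h2
        intro haYZ
        apply ha
        push_neg at h
        rcases Finset.mem_union.mp haYZ with hh | hh
        · exact Finset.mem_union_left _ (Finset.mem_erase.mpr ⟨h.2, hh⟩)
        · exact Finset.mem_union_right _ (Finset.mem_erase.mpr ⟨h.1, hh⟩)
    · intro w hw
      have hwz : w ≠ z := Finset.ne_of_mem_erase hw
      have hwZ : w ∈ Z := Finset.mem_of_mem_erase hw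
      have hwy : w ≠ y := fun e => hyZ (e ▸ hwZ)
      rw [if_neg (by tauto : ¬(w = z ∨ w = y))]
      refine Finset.mem_erase.mpr ⟨?_, h3 w hwZ⟩
      rw [← hfz]
      intro e
      exact hwz (hinv w z (Finset.mem_union_right _ hwZ) hzYZ e)
  · -- hj : maps into source
    intro g hg
    rw [mem_Mset] at hg
    obtain ⟨⟨h1, h2⟩, h3⟩ := hg
    have hzs : z ∉ Y.erase y ∪ Z.erase z := by simp [hzY]
    have hys : y ∉ Y.erase y ∪ Z.erase z := by simp [hyZ]
    have hgz : g z = z := h2 z hzs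
    have hgy : g y = y := h2 y hys
    rw [Finset.mem_filter, mem_Mset]
    try dsimp only
    refine ⟨⟨⟨?_, ?_⟩, ?_⟩, by rw [if_pos rfl]⟩
    · intro a ha
      by_cases haz : a = z
      · rw [if_pos haz]
        refine ⟨Finset.mem_union_left _ hy, ?_, fun e => hzy (haz ▸ e.symm ▸ rfl)⟩
        rw [if_neg hzy.symm, if_pos rfl, haz]
      · by_cases hay : a = y
        · rw [if_neg haz, if_pos hay]
          refine ⟨Finset.mem_union_right _ hz, ?_, fun e => hzy (hay ▸ e)⟩
          rw [if_pos rfl, hay]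
        · have has : a ∈ Y.erase y ∪ Z.erase z := by
            rcases Finset.mem_union.mp ha with h | h
            · exact Finset.mem_union_left _ (Finset.mem_erase.mpr ⟨hay, h⟩)
            · exact Finset.mem_union_right _ (Finset.mem_erase.mpr ⟨haz, h⟩)
          rw [if_neg haz, if_neg hay]
          have hga := h1 a has
          have hgaz : g a ≠ z := fun e => hzs (e ▸ hga.1)
          have hgay : g a ≠ y := fun e => hys (e ▸ hga.1)
          refine ⟨?_, ?_, hga.2.2⟩
          · rcases Finset.mem_union.mp hga.1 with h | h
            · exact Finset.mem_union_left _ (Finset.mem_of_mem_erase h)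
            · exact Finset.mem_union_right _ (Finset.mem_of_mem_erase h)
          · rw [if_neg hgaz, if_neg hgay]
            exact hga.2.1
    · intro a ha
      have haz : a ≠ z := fun e => ha (e ▸ Finset.mem_union_right _ hz)
      have hay : a ≠ y := fun e => ha (e ▸ Finset.mem_union_left _ hy)
      rw [if_neg haz, if_neg hay]
      apply h2
      intro has
      apply ha
      rcases Finset.mem_union.mp has with h | h
      · exact Finset.mem_union_left _ (Finset.mem_of_mem_erase h)
      · exact Finset.mem_union_right _ (Finset.mem_of_mem_erase h)
    · intro w hwZ
      by_cases hwz : w = z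
      · rw [if_pos hwz]; exact hy
      · have hwy : w ≠ y := fun e => hyZ (e ▸ hwZ)
        rw [if_neg hwz, if_neg hwy]
        exact Finset.mem_of_mem_erase (h3 w (Finset.mem_erase.mpr ⟨hwz, hwZ⟩))
  · -- left inverse : j (i f) = f
    intro f hf
    rw [Finset.mem_filter] at hf
    obtain ⟨hf, hfz⟩ := hf
    rw [mem_Mset] at hf
    obtain ⟨⟨h1, h2⟩, h3⟩ := hf
    have hfy : f y = z := by
      have := (h1 z (by simp [hz])).2.1
      rw [hfz] at this; exact this
    funext a
    try dsimp only
    by_cases haz : a = z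
    · rw [if_pos haz, haz, hfz]
    · by_cases hay : a = y
      · rw [if_neg haz, if_pos hay, hay, hfy]
      · rw [if_neg haz, if_neg hay, if_neg (by tauto : ¬(a = z ∨ a = y))]
  · -- right inverse : i (j g) = g
    intro g hg
    rw [mem_Mset] at hg
    obtain ⟨⟨h1, h2⟩, h3⟩ := hg
    have hzs : z ∉ Y.erase y ∪ Z.erase z := by simp [hzY]
    have hys : y ∉ Y.erase y ∪ Z.erase z := by simp [hyZ]
    funext a
    try dsimp only
    by_cases h : a = z ∨ a = y
    · rw [if_pos h]
      rcases h with e | e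
      · rw [e, h2 z hzs]
      · rw [e, h2 y hys]
    · push_neg at h
      rw [if_neg (by tauto : ¬(a = z ∨ a = y)), if_neg h.1, if_neg h.2]


lemma fiber_card_pm (S : Finset α) {u v : α} (hu : u ∈ S) (hv : v ∈ S) (huv : u ≠ v) :
    ((Mset S ∅).filter (fun f => f u = v)).card = (Mset ((S.erase u).erase v) ∅).card := by
  have hus : u ∉ (S.erase u).erase v := by simp
  have hvs : v ∉ (S.erase u).erase v := by simp
  apply Finset.card_bij' (i := fun f _ => fun a => if a = u ∨ a = v then a else f a)
    (j := fun g _ => fun a => if a = u then v else if a = v then u else g a)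
  · intro f hf
    rw [Finset.mem_filter] at hf
    obtain ⟨hf, hfu⟩ := hf
    rw [mem_Mset_empty] at hf
    obtain ⟨h1, h2⟩ := hf
    have hinv : ∀ a b, a ∈ S → b ∈ S → f a = f b → a = b := by
      intro a b ha hb hab
      rw [← (h1 b hb).2.1, ← hab, (h1 a ha).2.1]
    have hfv : f v = u := by
      have := (h1 u hu).2.1
      rw [hfu] at this; exact this
    rw [mem_Mset_empty]
    try dsimp only
    refine ⟨?_, ?_⟩
    · intro a ha
      rw [Finset.mem_erase, Finset.mem_erase] at ha
      obtain ⟨hav, hau, haS⟩ := ha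
      have hfau : f a ≠ u := by
        rw [← hfv]; intro e; exact hav (hinv a v haS hv e)
      have hfav : f a ≠ v := by
        rw [← hfu]; intro e; exact hau (hinv a u haS hu e)
      rw [if_neg (by tauto : ¬(a = u ∨ a = v))]
      refine ⟨?_, ?_, (h1 a haS).2.2⟩
      · exact Finset.mem_erase.mpr ⟨hfav, Finset.mem_erase.mpr ⟨hfau, (h1 a haS).1⟩⟩
      · rw [if_neg (by tauto : ¬(f a = u ∨ f a = v))]
        exact (h1 a haS).2.1
    · intro a ha
      by_cases h : a = u ∨ a = v
      · rw [if_pos h]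
      · rw [if_neg h]
        apply h2
        intro haS
        push_neg at h
        exact ha (Finset.mem_erase.mpr ⟨h.2, Finset.mem_erase.mpr ⟨h.1, haS⟩⟩)
  · intro g hg
    rw [mem_Mset_empty] at hg
    obtain ⟨h1, h2⟩ := hg
    have hgu : g u = u := h2 u hus
    have hgv : g v = v := h2 v hvs
    rw [Finset.mem_filter, mem_Mset_empty]
    try dsimp only
    refine ⟨⟨?_, ?_⟩, by rw [if_pos rfl]⟩
    · intro a ha
      by_cases hau : a = u
      · rw [if_pos hau]
        refine ⟨hv, ?_, fun e => huv (hau ▸ e.symm ▸ rfl)⟩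
        rw [if_neg huv.symm, if_pos rfl, hau]
      · by_cases hav : a = v
        · rw [if_neg hau, if_pos hav]
          refine ⟨hu, ?_, fun e => huv (hav ▸ e)⟩
          rw [if_pos rfl, hav]
        · have has : a ∈ (S.erase u).erase v :=
            Finset.mem_erase.mpr ⟨hav, Finset.mem_erase.mpr ⟨hau, ha⟩⟩
          rw [if_neg hau, if_neg hav]
          have hga := h1 a has
          have hgau : g a ≠ u := fun e => hus (e ▸ hga.1)
          have hgav : g a ≠ v := fun e => hvs (e ▸ hga.1)
          refine ⟨Finset.mem_of_mem_erase (Finset.mem_of_mem_erase hga.1), ?_, hga.2.2⟩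
          rw [if_neg hgau, if_neg hgav]
          exact hga.2.1
    · intro a ha
      have hau : a ≠ u := fun e => ha (e ▸ hu)
      have hav : a ≠ v := fun e => ha (e ▸ hv)
      rw [if_neg hau, if_neg hav]
      apply h2
      intro has
      exact ha (Finset.mem_of_mem_erase (Finset.mem_of_mem_erase has))
  · intro f hf
    rw [Finset.mem_filter] at hf
    obtain ⟨hf, hfu⟩ := hf
    rw [mem_Mset_empty] at hf
    obtain ⟨h1, h2⟩ := hf
    have hfv : f v = u := by
      have := (h1 u hu).2.1
      rw [hfu] at this; exact this
    funext a
    try dsimp only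
    by_cases hau : a = u
    · rw [if_pos hau, hau, hfu]
    · by_cases hav : a = v
      · rw [if_neg hau, if_pos hav, hav, hfv]
      · rw [if_neg hau, if_neg hav, if_neg (by tauto : ¬(a = u ∨ a = v))]
  · intro g hg
    rw [mem_Mset_empty] at hg
    obtain ⟨h1, h2⟩ := hg
    funext a
    try dsimp only
    by_cases h : a = u ∨ a = v
    · rw [if_pos h]
      rcases h with e | e
      · rw [e, h2 u hus]
      · rw [e, h2 v hvs]
    · push_neg at h
      rw [if_neg (by tauto : ¬(a = u ∨ a = v)), if_neg h.1, if_neg h.2]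


lemma card_Mset_step_Z (Y Z : Finset α) (hd : Disjoint Y Z) {z : α} (hz : z ∈ Z) :
    (Mset Y Z).card = ∑ y ∈ Y, (Mset (Y.erase y) (Z.erase z)).card := by
  rw [Finset.card_eq_sum_card_fiberwise (f := fun f => f z) (t := Y)
    (fun f hf => (mem_Mset.mp hf).2 z hz)]
  exact Finset.sum_congr rfl (fun y hy => fiber_card Y Z hd hz hy)

lemma card_Mset_step_Y (Y : Finset α) {a : α} (ha : a ∈ Y) :
    (Mset Y ∅).card = ∑ b ∈ Y.erase a, (Mset ((Y.erase a).erase b) ∅).card := by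
  rw [Finset.card_eq_sum_card_fiberwise (f := fun f => f a) (t := Y.erase a) ?_]
  · exact Finset.sum_congr rfl (fun b hb => fiber_card_pm Y ha
      (Finset.mem_of_mem_erase hb) (Finset.ne_of_mem_erase hb).symm)
  · intro f hf
    rw [Finset.mem_coe, mem_Mset_empty] at hf
    have := hf.1 a ha
    exact Finset.mem_erase.mpr ⟨this.2.2, this.1⟩

lemma df_mul (m : ℕ) (hm : 1 ≤ m) : m‼ = m * (m - 2)‼ := by
  match m with
  | 1 => decide
  | (n+2) => simp [Nat.doubleFactorial_add_two n]

lemma df_split : ∀ (k m : ℕ), 2 * k ≤ m + 1 →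
    m‼ = (∏ i ∈ range k, (m - 2 * i)) * (m - 2 * k)‼ := by
  intro k
  induction k with
  | zero => simp
  | succ k ih =>
    intro m hm
    have hm1 : 1 ≤ m := by omega
    rw [df_mul m hm1, ih (m - 2) (by omega)]
    have e1 : ∏ i ∈ range k, (m - 2 * (i + 1)) = ∏ i ∈ range k, (m - 2 - 2 * i) :=
      Finset.prod_congr rfl (fun i _ => by omega)
    have e2 : m - 2 * (k + 1) = m - 2 - 2 * k := by omega
    have e3 : m - 2 * 0 = m := by omega
    rw [Finset.prod_range_succ', e1, e2, e3]
    ring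

lemma card_Mset_eq : ∀ (n : ℕ) (Y Z : Finset α), Y.card + Z.card = n → Disjoint Y Z →
    Z.card ≤ Y.card → Even n →
    (Mset Y Z).card = (∏ i ∈ range Z.card, (Y.card - i)) * (Y.card - Z.card - 1)‼ := by
  intro n
  induction n using Nat.strong_induction_on with
  | _ n ih =>
    intro Y Z hn hd hle he
    rcases Z.eq_empty_or_nonempty with hZ | ⟨z, hz⟩
    · subst hZ
      rcases Y.eq_empty_or_nonempty with hY | ⟨a, ha⟩
      · subst hY
        have : Mset (∅ : Finset α) ∅ = {id} := by
          ext f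
          rw [mem_Mset_empty, Finset.mem_singleton]
          constructor
          · rintro ⟨-, h2⟩; funext x; exact h2 x (Finset.notMem_empty x)
          · rintro rfl
            exact ⟨fun a ha => absurd ha (Finset.notMem_empty a), fun a _ => rfl⟩
        simp [this]
      · have hY2 : 2 ≤ Y.card := by
          obtain ⟨m, hm⟩ := he
          have h1 : 1 ≤ Y.card := Finset.card_pos.mpr ⟨a, ha⟩
          simp at hn
          omega
        have heven' : Even (n - 2) := by obtain ⟨m, hm⟩ := he; exact ⟨m - 1, by omega⟩
        simp only [Finset.card_empty] at hn ⊢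
        rw [card_Mset_step_Y Y ha]
        have hsum : ∀ b ∈ Y.erase a, (Mset ((Y.erase a).erase b) ∅).card = (Y.card - 3)‼ := by
          intro b hb
          have hcard2 : ((Y.erase a).erase b).card = Y.card - 2 := by
            rw [Finset.card_erase_of_mem hb, Finset.card_erase_of_mem ha]
            omega
          rw [ih (n - 2) (by omega) _ _
            (by simp only [Finset.card_empty, hcard2]; omega) (by simp)
            (by simp) heven']
          simp only [Finset.card_empty, Finset.prod_range_zero, one_mul, Nat.sub_zero, hcard2]
          congr 1 <;> omega
        rw [Finset.sum_congr rfl hsum, Finset.sum_const, Finset.card_erase_of_mem ha, smul_eq_mul]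
        rw [Finset.prod_range_zero, one_mul, Nat.sub_zero, df_mul (Y.card - 1) (by omega)]
        congr 2 <;> omega
    · have hz1 : 1 ≤ Z.card := Finset.card_pos.mpr ⟨z, hz⟩
      have hy1 : 1 ≤ Y.card := le_trans hz1 hle
      have heven' : Even (n - 2) := by obtain ⟨m, hm⟩ := he; exact ⟨m - 1, by omega⟩
      rw [card_Mset_step_Z Y Z hd hz]
      have hsum : ∀ y ∈ Y, (Mset (Y.erase y) (Z.erase z)).card =
          (∏ i ∈ range (Z.card - 1), (Y.card - 1 - i)) * (Y.card - Z.card - 1)‼ := by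
        intro y hy
        have hd' : Disjoint (Y.erase y) (Z.erase z) :=
          Finset.disjoint_of_subset_left (Finset.erase_subset _ _)
            (Finset.disjoint_of_subset_right (Finset.erase_subset _ _) hd)
        rw [ih (n - 2) (by omega) _ _
          (by rw [Finset.card_erase_of_mem hy, Finset.card_erase_of_mem hz]; omega) hd'
          (by rw [Finset.card_erase_of_mem hy, Finset.card_erase_of_mem hz]; omega) heven']
        rw [Finset.card_erase_of_mem hy, Finset.card_erase_of_mem hz]
        have e : Y.card - 1 - (Z.card - 1) - 1 = Y.card - Z.card - 1 := by omega
        rw [e]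
      rw [Finset.sum_congr rfl hsum, Finset.sum_const, smul_eq_mul]
      obtain ⟨k, hk⟩ : ∃ k, Z.card = k + 1 := ⟨Z.card - 1, by omega⟩
      have e1 : ∏ i ∈ range k, (Y.card - (i + 1)) = ∏ i ∈ range k, (Y.card - 1 - i) :=
        Finset.prod_congr rfl (fun i _ => by omega)
      rw [hk, Nat.add_sub_cancel, Finset.prod_range_succ', e1, Nat.sub_zero]
      ring

end PMaux

/-- A perfect matching on a finite type: a fixed-point-free involution. -/
def IsPM {α : Type*} (f : α → α) : Prop :=
  Function.Involutive f ∧ ∀ a, f a ≠ a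

/-- For disjoint `Y, Z` covering the ground set with `|Y| ≥ |Z|` and `|Y|+|Z|` even,
the probability that a uniform perfect matching matches every element of `Z` into `Y`
equals `∏_{i<|Z|} (|Y|-i)/(|Y|+|Z|-1-2i)`, which is at least `2^{-|Z|}`. -/
theorem matching_into_Y_probability {α : Type*} [Fintype α] [DecidableEq α]
    (Y Z : Finset α) (hdisj : Disjoint Y Z) (hcover : Y ∪ Z = Finset.univ)
    (hcard : Z.card ≤ Y.card) (heven : Even (Y.card + Z.card)) :
    ((((Finset.univ : Finset (α → α)).filter
        (fun f => IsPM f ∧ ∀ z ∈ Z, f z ∈ Y)).card : ℝ) /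
      (((Finset.univ : Finset (α → α)).filter (fun f => IsPM f)).card : ℝ)
      = ∏ i ∈ Finset.range Z.card,
          ((Y.card : ℝ) - i) / ((Y.card : ℝ) + Z.card - 1 - 2 * i)) ∧
    (2 : ℝ)⁻¹ ^ Z.card ≤
      ((((Finset.univ : Finset (α → α)).filter
        (fun f => IsPM f ∧ ∀ z ∈ Z, f z ∈ Y)).card : ℝ) /
      (((Finset.univ : Finset (α → α)).filter (fun f => IsPM f)).card : ℝ)) := by
  have hn : Fintype.card α = Y.card + Z.card := by
    rw [← Finset.card_univ, ← hcover, Finset.card_union_of_disjoint hdisj]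
  have hnum_set : (Finset.univ : Finset (α → α)).filter
      (fun f => IsPM f ∧ ∀ z ∈ Z, f z ∈ Y) = Mset Y Z := by
    ext f
    rw [Finset.mem_filter]
    simp only [Finset.mem_filter, Finset.mem_univ, true_and, mem_Mset, hcover, IsPM,
      Function.Involutive, not_true, false_implies, implies_true, and_true, true_implies,
      true_and, ne_eq, forall_and]
  have hden_set : (Finset.univ : Finset (α → α)).filter (fun f => IsPM f)
      = Mset (Finset.univ : Finset α) ∅ := by
    ext f
    rw [Finset.mem_filter]
    simp only [Finset.mem_filter, Finset.mem_univ, true_and, mem_Mset, Finset.union_empty,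
      IsPM, Function.Involutive, not_true, false_implies, implies_true, and_true, true_implies,
      true_and, ne_eq, forall_and, Finset.notMem_empty]
  have hnumcard := card_Mset_eq (Y.card + Z.card) Y Z rfl hdisj hcard heven
  have hdencard : (Mset (Finset.univ : Finset α) ∅).card = (Y.card + Z.card - 1)‼ := by
    rw [card_Mset_eq (Y.card + Z.card) Finset.univ ∅
      (by rw [Finset.card_univ, Finset.card_empty, hn]; omega)
      (Finset.disjoint_empty_right _) (by simp) heven,
      Finset.card_empty, Finset.prod_range_zero, one_mul, Nat.sub_zero,
      Finset.card_univ, hn]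
  have hsplit : (Y.card + Z.card - 1)‼ =
      (∏ i ∈ range Z.card, (Y.card + Z.card - 1 - 2 * i)) * (Y.card - Z.card - 1)‼ := by
    have e : Y.card + Z.card - 1 - 2 * Z.card = Y.card - Z.card - 1 := by omega
    rw [df_split Z.card (Y.card + Z.card - 1) (by omega), e]
  have hD : (0:ℝ) < ((Y.card - Z.card - 1)‼ : ℝ) := by
    exact_mod_cast Nat.doubleFactorial_pos _
  have hmain : ((((Finset.univ : Finset (α → α)).filter
        (fun f => IsPM f ∧ ∀ z ∈ Z, f z ∈ Y)).card : ℝ) /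
      (((Finset.univ : Finset (α → α)).filter (fun f => IsPM f)).card : ℝ)
      = ∏ i ∈ Finset.range Z.card,
          ((Y.card : ℝ) - i) / ((Y.card : ℝ) + Z.card - 1 - 2 * i)) := by
    rw [hnum_set, hden_set, hnumcard, hdencard, hsplit, Nat.cast_mul, Nat.cast_mul,
      Nat.cast_prod, Nat.cast_prod, mul_div_mul_right _ _ (ne_of_gt hD),
      ← Finset.prod_div_distrib]
    apply Finset.prod_congr rfl
    intro i hi
    have hi' : i < Z.card := Finset.mem_range.mp hi
    rw [Nat.cast_sub (by omega : i ≤ Y.card),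
      Nat.cast_sub (by omega : 2 * i ≤ Y.card + Z.card - 1),
      Nat.cast_sub (by omega : 1 ≤ Y.card + Z.card)]
    push_cast
    ring_nf
  refine ⟨hmain, ?_⟩
  rw [hmain]
  rw [show ((2:ℝ)⁻¹) ^ Z.card = ∏ _i ∈ Finset.range Z.card, (2:ℝ)⁻¹ by
    rw [Finset.prod_const, Finset.card_range]]
  apply Finset.prod_le_prod (fun i _ => by norm_num)
  intro i hi
  have hi' : i < Z.card := Finset.mem_range.mp hi
  have h1 : ((i:ℝ)) + 1 ≤ (Z.card : ℝ) := by exact_mod_cast hi'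
  have h2 : (Z.card : ℝ) ≤ (Y.card : ℝ) := Nat.cast_le.mpr hcard
  have hdpos : (0:ℝ) < (Y.card : ℝ) + Z.card - 1 - 2 * i := by linarith
  rw [le_div_iff₀ hdpos]
  linarith
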